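/- arXiv:1705.07948 — 2 statements merged into one kernel-verified Lean document; each statement's English description precedes it below -/
import Mathlib

section
/- Let Ω ⊆ ℝⁿ be open, and let u_k : Ω → ℝᵐ be a sequence of viscosity solutions of the minimal surface system converging uniformly on every compact subset of Ω to a continuous map u : Ω → ℝᵐ. Then u is a viscosity solution of the minimal surface system. -/
open Set Metric MeasureTheory

noncomputable section

/-- Euclidean space `ℝ^n`. -/
abbrev Euc (n : ℕ) : Type := EuclideanSpace ℝ (Fin n)

/-- The point `X = (x, z)` of `ℝ^{n+m}`. -/
def pairPt (n m : ℕ) (x : Euc n) (z : Euc m) : Euc (n + m) :=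
  WithLp.toLp 2 (fun i => Fin.addCases (motive := fun _ => ℝ) (fun j => x j) (fun j => z j) i)

/-- The `x`-part of a point `X ∈ ℝ^{n+m}`. -/
def xPart (n m : ℕ) (X : Euc (n + m)) : Euc n := WithLp.toLp 2 (fun i => X (Fin.castAdd m i))

/-- The `z`-part of a point `X ∈ ℝ^{n+m}`. -/
def zPart (n m : ℕ) (X : Euc (n + m)) : Euc m := WithLp.toLp 2 (fun i => X (Fin.natAdd n i))

/-- `H` is a comparison function for the minimal surface system in `U ⊆ ℝ^{n+m}`:
`H` is `C²` on `U` and for every `X ∈ U` and every `n`-dimensional subspace `L`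
orthogonal to `∇H(X)` (i.e. contained in the kernel of `DH(X)`), the Laplacian of `H`
along `L`, computed with any orthonormal basis of `L`, is positive. -/
def IsComparison (n m : ℕ) (U : Set (Euc (n + m))) (H : Euc (n + m) → ℝ) : Prop :=
  ContDiffOn ℝ 2 H U ∧
    ∀ X ∈ U, ∀ L : Submodule ℝ (Euc (n + m)), Module.finrank ℝ L = n →
      (∀ v ∈ L, fderivWithin ℝ H U X v = 0) →
      ∀ e : Fin n → Euc (n + m), (∀ k, e k ∈ L) → Orthonormal ℝ e →
        0 < ∑ k, iteratedFDerivWithin ℝ 2 H U X ![e k, e k]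

/-- `Γ` is a viscosity minimal set in the open set `W ⊆ ℝ^{n+m}`: for every open `U ⊆ W`,
every comparison function `H` in `U` and every `c`, there is no point of `Γ ∩ U` where
`H = c` while `Γ ∩ U ⊆ {H ≤ c}`. -/
def IsViscosityMinimalSet (n m : ℕ) (W : Set (Euc (n + m))) (Γ : Set (Euc (n + m))) : Prop :=
  ∀ U : Set (Euc (n + m)), U ⊆ W → IsOpen U →
    ∀ H : Euc (n + m) → ℝ, IsComparison n m U H → ∀ c : ℝ,
      ¬ ∃ X₀ ∈ Γ ∩ U, H X₀ = c ∧ ∀ X ∈ Γ ∩ U, H X ≤ c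

/-- The graph `{(x, u x) : x ∈ Ω} ⊆ ℝ^{n+m}` of `u : Ω → ℝ^m`. -/
def graphSet (n m : ℕ) (Ω : Set (Euc n)) (u : Euc n → Euc m) : Set (Euc (n + m)) :=
  (fun x => pairPt n m x (u x)) '' Ω

/-- `u : Ω → ℝ^m` is a viscosity solution of the minimal surface system. -/
def IsViscositySolution (n m : ℕ) (Ω : Set (Euc n)) (u : Euc n → Euc m) : Prop :=
  ContinuousOn u Ω ∧ IsViscosityMinimalSet n m univ (graphSet n m Ω u)
/-- The area integrand `F(A) = √(det(Iₘ + AᵀA))` for an `n × m` matrix `A`. -/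
def msF (n m : ℕ) (A : Matrix (Fin n) (Fin m) ℝ) : ℝ :=
  Real.sqrt (1 + Matrix.transpose A * A).det

/-- The second partial derivative `F_{αi,βj}` of `F` with respect to the entries
`A_{iα}` and `A_{jβ}`. -/
def msF2 (n m : ℕ) (A : Matrix (Fin n) (Fin m) ℝ) (i j : Fin n) (α β : Fin m) : ℝ :=
  deriv (fun s : ℝ => deriv (fun t : ℝ =>
    msF n m (A + t • Matrix.single i α 1 + s • Matrix.single j β 1)) 0) 0

/-- The Jacobian matrix `Du(x) = (∂ᵢ u^α(x))`, computed within `Ω`. -/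
def gradMat (n m : ℕ) (Ω : Set (Euc n)) (u : Euc n → Euc m) (x : Euc n) :
    Matrix (Fin n) (Fin m) ℝ :=
  fun i α => fderivWithin ℝ u Ω x (EuclideanSpace.single i 1) α

/-- The second partial derivative `∂ᵢ∂ⱼ u (x)`, computed within `Ω`. -/
def secondPartial (n m : ℕ) (Ω : Set (Euc n)) (u : Euc n → Euc m) (x : Euc n)
    (i j : Fin n) : Euc m :=
  iteratedFDerivWithin ℝ 2 u Ω x ![EuclideanSpace.single i 1, EuclideanSpace.single j 1]

/-- `u` is a classical solution of the minimal surface system on `Ω`: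
`∑_{i,j,β} F_{αi,βj}(Du(x)) ∂ᵢ∂ⱼ u^β(x) = 0` for all `x ∈ Ω` and all `α`. -/
def IsClassicalSolution (n m : ℕ) (Ω : Set (Euc n)) (u : Euc n → Euc m) : Prop :=
  ∀ x ∈ Ω, ∀ α : Fin m,
    ∑ i, ∑ j, ∑ β, msF2 n m (gradMat n m Ω u x) i j α β *
      secondPartial n m Ω u x i j β = 0

/-- The maximal Pucci operator `M⁺_{λ,Λ}(N) = Λ·∑_{μᵢ>0} μᵢ + λ·∑_{μᵢ<0} μᵢ`
on symmetric matrices (where the `μᵢ` are the eigenvalues of `N`). -/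
def pucciPlus {n : ℕ} (lam Lam : ℝ) (N : Matrix (Fin n) (Fin n) ℝ) : ℝ :=
  if h : N.IsHermitian then
    ∑ i, (if 0 < h.eigenvalues i then Lam * h.eigenvalues i else lam * h.eigenvalues i)
  else 0

/-- The Hessian matrix `D²φ(x)` of a scalar function, computed within `s`. -/
def hessWithin (n : ℕ) (s : Set (Euc n)) (φ : Euc n → ℝ) (x : Euc n) :
    Matrix (Fin n) (Fin n) ℝ :=
  fun i j =>
    iteratedFDerivWithin ℝ 2 φ s x ![EuclideanSpace.single i 1, EuclideanSpace.single j 1]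

/-- `‖φ‖_{C^{1,1}} ≤ 1` on `s`: `|φ| ≤ 1`, `|Dφ| ≤ 1` and `|D²φ| ≤ 1` on `s`. -/
def C11Bound (n : ℕ) (s : Set (Euc n)) (φ : Euc n → ℝ) : Prop :=
  (∀ x ∈ s, |φ x| ≤ 1) ∧ (∀ x ∈ s, ‖fderivWithin ℝ φ s x‖ ≤ 1) ∧
    (∀ x ∈ s, ‖iteratedFDerivWithin ℝ 2 φ s x‖ ≤ 1)

/-- The Laplacian `Δf(x) = ∑ᵢ ∂ᵢᵢ f(x)` of a scalar function, computed within `s`. -/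
def lapWithin (n : ℕ) (s : Set (Euc n)) (f : Euc n → ℝ) (x : Euc n) : ℝ :=
  ∑ i, iteratedFDerivWithin ℝ 2 f s x
    ![EuclideanSpace.single i 1, EuclideanSpace.single i 1]

/-- `h : V → ℝ^m` is harmonic on `V`: it is `C²` and `Δh^α = 0` on `V` for each `α`. -/
def HarmonicOnE (n m : ℕ) (V : Set (Euc n)) (h : Euc n → Euc m) : Prop :=
  ContDiffOn ℝ 2 h V ∧ ∀ x ∈ V, ∀ α : Fin m,
    ∑ i, (iteratedFDerivWithin ℝ 2 h V x
      ![EuclideanSpace.single i 1, EuclideanSpace.single i 1]) α = 0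

/-- The quadratic polynomial map `q : ℝⁿ → ℝᵐ` with constant part `c`, linear part `B`
and quadratic part `Q`, i.e. `q^α(x) = c^α + ∑ᵢ Bᵢα xᵢ + ∑ᵢⱼ Qαᵢⱼ xᵢ xⱼ`. -/
def quadMap (n m : ℕ) (c : Euc m) (B : Matrix (Fin n) (Fin m) ℝ)
    (Q : Fin m → Matrix (Fin n) (Fin n) ℝ) (x : Euc n) : Euc m :=
  WithLp.toLp 2 (fun α => c α + ∑ i, B i α * x i + ∑ i, ∑ j, Q α i j * x i * x j)

/-- The quadratic polynomial with quadratic part `Q` is harmonic, i.e. each quadratic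
part has zero trace. -/
def QuadHarmonic (n m : ℕ) (Q : Fin m → Matrix (Fin n) (Fin n) ℝ) : Prop :=
  ∀ α, ∑ i, Q α i i = 0

/-- All coefficients of the quadratic polynomial with data `(c, B, Q)` are bounded by `K`. -/
def QuadCoeffBound (n m : ℕ) (c : Euc m) (B : Matrix (Fin n) (Fin m) ℝ)
    (Q : Fin m → Matrix (Fin n) (Fin n) ℝ) (K : ℝ) : Prop :=
  (∀ α, |c α| ≤ K) ∧ (∀ i α, |B i α| ≤ K) ∧ (∀ α i j, |Q α i j| ≤ K)

/-- The oscillation of `w` on `s`: the infimum of radii `ρ ≥ 0` such that the image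
`w(s)` is contained in some ball `B_ρ(z)` of `ℝᵐ`. -/
def oscOn (n m : ℕ) (s : Set (Euc n)) (w : Euc n → Euc m) : ℝ :=
  sInf {ρ : ℝ | 0 ≤ ρ ∧ ∃ z : Euc m, ∀ x ∈ s, w x ∈ ball z ρ}


section Aux
variable {N : ℕ}
local notation "E" => EuclideanSpace ℝ (Fin N)

def Mbil (N : ℕ) : E →L[ℝ] E →L[ℝ] ℝ :=
  LinearMap.toContinuousLinearMap
  { toFun := fun v => (2 : ℝ) • (innerSL ℝ v)
    map_add' := by intro a b; ext w; simp [inner_add_left]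
    map_smul' := by intro c a; ext w; simp [real_inner_smul_left]; ring }

@[simp] lemma Mbil_apply (v w : E) : Mbil N v w = 2 * (inner ℝ v w : ℝ) := by
  simp [Mbil]

lemma hasFDerivAt_psi (X₀ : E) (r : ℝ) (X : E) :
    HasFDerivAt (fun Y : E => r ^ 2 - (inner ℝ (Y - X₀) (Y - X₀) : ℝ))
      (-(Mbil N (X - X₀))) X := by
  have h1 : HasFDerivAt (fun Y : E => Y - X₀) (ContinuousLinearMap.id ℝ E) X :=
    (hasFDerivAt_id X).sub_const X₀
  have h2 := (h1.inner ℝ h1)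
  have h3 := (hasFDerivAt_const (r ^ 2) X).sub h2
  refine h3.congr_fderiv (Eq.symm ?_)
  ext w
  rw [ContinuousLinearMap.neg_apply, Mbil_apply]
  rw [ContinuousLinearMap.sub_apply, ContinuousLinearMap.comp_apply]
  rw [ContinuousLinearMap.prod_apply]
  rw [fderivInnerCLM_apply]
  simp [real_inner_comm (X - X₀) w]
  ring

def psiq (N : ℕ) (X₀ : E) (r : ℝ) : E → ℝ := fun Y => r ^ 2 - (inner ℝ (Y - X₀) (Y - X₀) : ℝ)

lemma contDiff_psiq (X₀ : E) (r : ℝ) : ContDiff ℝ 2 (psiq N X₀ r) :=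
  contDiff_const.sub (ContDiff.inner ℝ (contDiff_id.sub contDiff_const) (contDiff_id.sub contDiff_const))

lemma psiq_eq_norm (X₀ : E) (r : ℝ) (Y : E) :
    psiq N X₀ r Y = r ^ 2 - ‖Y - X₀‖ ^ 2 := by
  rw [psiq, real_inner_self_eq_norm_sq]

lemma fderiv_psiq (X₀ : E) (r : ℝ) :
    fderiv ℝ (psiq N X₀ r) = fun X => -(Mbil N (X - X₀)) :=
  funext fun X => (hasFDerivAt_psi X₀ r X).fderiv

lemma hasFDerivAt_fderiv_psiq (X₀ : E) (r : ℝ) (X : E) :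
    HasFDerivAt (fderiv ℝ (psiq N X₀ r)) (-(Mbil N)) X := by
  rw [fderiv_psiq]
  have heq : (fun X : E => -(Mbil N (X - X₀))) = fun X => (-(Mbil N)) X + Mbil N X₀ := by
    funext Y; simp [map_sub]; abel
  rw [heq]
  exact (-(Mbil N)).hasFDerivAt.add_const _

section HP
variable {U : Set (EuclideanSpace ℝ (Fin N))} {H : EuclideanSpace ℝ (Fin N) → ℝ}

lemma diffAt_H (hU : IsOpen U) (hH2 : ContDiffOn ℝ 2 H U) {X : E} (hX : X ∈ U) :
    DifferentiableAt ℝ H X :=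
  (hH2.contDiffAt (hU.mem_nhds hX)).differentiableAt two_ne_zero

lemma diffAt_fderiv_H (hU : IsOpen U) (hH2 : ContDiffOn ℝ 2 H U) {X : E} (hX : X ∈ U) :
    DifferentiableAt ℝ (fderiv ℝ H) X := by
  have h1 : ContDiffAt ℝ 2 H X := hH2.contDiffAt (hU.mem_nhds hX)
  have h2 : ContDiffAt ℝ 1 (fderiv ℝ H) X := h1.fderiv_right (le_refl _)
  exact h2.differentiableAt one_ne_zero

lemma firstDeriv_Hp (hU : IsOpen U) (hH2 : ContDiffOn ℝ 2 H U) (X₀ : E) (r ε : ℝ)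
    {X : E} (hX : X ∈ U) :
    fderiv ℝ (fun Y => H Y + ε * psiq N X₀ r Y) X
      = fderiv ℝ H X + ε • (-(Mbil N (X - X₀))) := by
  have hψ : DifferentiableAt ℝ (psiq N X₀ r) X := (hasFDerivAt_psi X₀ r X).differentiableAt
  rw [fderiv_fun_add (diffAt_H hU hH2 hX) (hψ.const_mul ε), fderiv_const_mul hψ]
  congr 1
  rw [show fderiv ℝ (psiq N X₀ r) X = -(Mbil N (X - X₀)) from (hasFDerivAt_psi X₀ r X).fderiv]

lemma secondDeriv_Hp (hU : IsOpen U) (hH2 : ContDiffOn ℝ 2 H U) (X₀ : E) (r ε : ℝ)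
    {X : E} (hX : X ∈ U) :
    fderiv ℝ (fderiv ℝ (fun Y => H Y + ε * psiq N X₀ r Y)) X
      = fderiv ℝ (fderiv ℝ H) X + ε • (-(Mbil N)) := by
  have hev : fderiv ℝ (fun Y => H Y + ε * psiq N X₀ r Y)
      =ᶠ[nhds X] fun Y => fderiv ℝ H Y + ε • fderiv ℝ (psiq N X₀ r) Y := by
    filter_upwards [hU.mem_nhds hX] with Y hY
    rw [firstDeriv_Hp hU hH2 X₀ r ε hY, fderiv_psiq (N := N) X₀ r]
  rw [hev.fderiv_eq]
  have h1 : HasFDerivAt (fderiv ℝ H) (fderiv ℝ (fderiv ℝ H) X) X :=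
    (diffAt_fderiv_H hU hH2 hX).hasFDerivAt
  have h2 : HasFDerivAt (fun Y => ε • fderiv ℝ (psiq N X₀ r) Y) (ε • (-(Mbil N))) X :=
    (hasFDerivAt_fderiv_psiq X₀ r X).const_smul ε
  exact (h1.add h2).fderiv
end HP

open Filter in
lemma key_lower_bound (n m : ℕ) (U : Set (Euc (n + m))) (hU : IsOpen U)
    (H : Euc (n + m) → ℝ) (hH : IsComparison n m U H)
    (K : Set (Euc (n + m))) (hKc : IsCompact K) (hKU : K ⊆ U) :
    ∃ δ > 0, ∃ η > 0, ∀ X ∈ K, ∀ e : Fin n → Euc (n + m), Orthonormal ℝ e →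
      (∀ k, |fderiv ℝ H X (e k)| ≤ η) →
      δ ≤ ∑ k, fderiv ℝ (fderiv ℝ H) X (e k) (e k) := by
  by_contra hcon
  push_neg at hcon
  have hseq : ∀ j : ℕ, ∃ p : (Euc (n + m)) × (Fin n → Euc (n + m)), p.1 ∈ K ∧
      Orthonormal ℝ p.2 ∧ (∀ k, |fderiv ℝ H p.1 (p.2 k)| ≤ 1 / (j + 1)) ∧
      ∑ k, fderiv ℝ (fderiv ℝ H) p.1 (p.2 k) (p.2 k) < 1 / (j + 1) := by
    intro j
    obtain ⟨X, hX, e, h1, h2, h3⟩ := hcon (1 / (j + 1)) (by positivity) (1 / (j + 1)) (by positivity)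
    exact ⟨(X, e), hX, h1, h2, h3⟩
  choose p hp1 hp2 hp3 hp4 using hseq
  have hQc : IsCompact (K ×ˢ Set.pi Set.univ (fun _ : Fin n => sphere (0 : Euc (n + m)) 1)) :=
    hKc.prod (isCompact_univ_pi fun _ => isCompact_sphere 0 1)
  have hpQ : ∀ j, p j ∈ K ×ˢ Set.pi Set.univ (fun _ : Fin n => sphere (0 : Euc (n + m)) 1) :=
    fun j => ⟨hp1 j, fun k _ => by simpa [mem_sphere_zero_iff_norm] using (hp2 j).1 k⟩
  obtain ⟨a, haQ, φ, hφ, hconv⟩ := hQc.tendsto_subseq hpQ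
  have haK : a.1 ∈ K := haQ.1
  have haU : a.1 ∈ U := hKU haK
  have h1t : Tendsto (fun l => (p (φ l)).1) atTop (nhds a.1) :=
    (continuous_fst.tendsto a).comp hconv
  have h2t : ∀ k, Tendsto (fun l => (p (φ l)).2 k) atTop (nhds (a.2 k)) :=
    fun k => ((continuous_apply k).tendsto a.2).comp ((continuous_snd.tendsto a).comp hconv)
  -- rate bound
  have hrate : Tendsto (fun l : ℕ => 1 / ((l : ℝ) + 1)) atTop (nhds 0) :=
    tendsto_one_div_add_atTop_nhds_zero_nat
  have hratebig : ∀ l : ℕ, 1 / ((φ l : ℝ) + 1) ≤ 1 / ((l : ℝ) + 1) := by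
    intro l
    apply one_div_le_one_div_of_le (by positivity)
    have h := hφ.le_apply (x := l)
    have : (l : ℝ) ≤ (φ l : ℝ) := by exact_mod_cast h
    linarith
  -- continuity of derivatives
  have hgc : ContinuousOn (fderiv ℝ H) U := hH.1.continuousOn_fderiv_of_isOpen hU one_le_two
  have hBc : ContinuousOn (fderiv ℝ (fderiv ℝ H)) U :=
    (hH.1.fderiv_of_isOpen hU le_rfl).continuousOn_fderiv_of_isOpen hU le_rfl
  have hgX : Tendsto (fun l => fderiv ℝ H ((p (φ l)).1)) atTop (nhds (fderiv ℝ H a.1)) :=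
    ((hgc.continuousAt (hU.mem_nhds haU)).tendsto).comp h1t
  have hBX : Tendsto (fun l => fderiv ℝ (fderiv ℝ H) ((p (φ l)).1)) atTop
      (nhds (fderiv ℝ (fderiv ℝ H) a.1)) :=
    ((hBc.continuousAt (hU.mem_nhds haU)).tendsto).comp h1t
  -- limit frame orthonormal
  have haon : Orthonormal ℝ a.2 := by
    rw [orthonormal_iff_ite]
    intro i j
    have hlim : Tendsto (fun l => (inner ℝ ((p (φ l)).2 i) ((p (φ l)).2 j) : ℝ)) atTop
        (nhds (inner ℝ (a.2 i) (a.2 j))) := (h2t i).inner (h2t j)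
    have hval : ∀ l, (inner ℝ ((p (φ l)).2 i) ((p (φ l)).2 j) : ℝ) = if i = j then 1 else 0 :=
      fun l => orthonormal_iff_ite.mp (hp2 (φ l)) i j
    have : Tendsto (fun l => (inner ℝ ((p (φ l)).2 i) ((p (φ l)).2 j) : ℝ)) atTop
        (nhds (if i = j then 1 else 0)) := by
      simp only [hval]; exact tendsto_const_nhds
    exact tendsto_nhds_unique hlim this
  -- limit gradient kernel
  have hker : ∀ k, fderiv ℝ H a.1 (a.2 k) = 0 := by
    intro k
    have ht : Tendsto (fun l => fderiv ℝ H ((p (φ l)).1) ((p (φ l)).2 k)) atTop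
        (nhds (fderiv ℝ H a.1 (a.2 k))) :=
      (isBoundedBilinearMap_apply.continuous.tendsto _).comp (hgX.prodMk_nhds (h2t k))
    have hz : Tendsto (fun l => fderiv ℝ H ((p (φ l)).1) ((p (φ l)).2 k)) atTop (nhds 0) := by
      apply squeeze_zero_norm (t₀ := atTop) ?_ hrate
      intro l
      calc ‖fderiv ℝ H ((p (φ l)).1) ((p (φ l)).2 k)‖ ≤ 1 / ((φ l : ℝ) + 1) := by
            simpa [Real.norm_eq_abs] using (hp3 (φ l)) k
        _ ≤ 1 / ((l : ℝ) + 1) := hratebig l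
    exact tendsto_nhds_unique ht hz
  -- limit of sums
  have hsumt : Tendsto (fun l => ∑ k, fderiv ℝ (fderiv ℝ H) ((p (φ l)).1) ((p (φ l)).2 k) ((p (φ l)).2 k))
      atTop (nhds (∑ k, fderiv ℝ (fderiv ℝ H) a.1 (a.2 k) (a.2 k))) := by
    apply tendsto_finset_sum
    intro k _
    have t1 : Tendsto (fun l => fderiv ℝ (fderiv ℝ H) ((p (φ l)).1) ((p (φ l)).2 k)) atTop
        (nhds (fderiv ℝ (fderiv ℝ H) a.1 (a.2 k))) :=
      (isBoundedBilinearMap_apply.continuous.tendsto _).comp (hBX.prodMk_nhds (h2t k))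
    exact (isBoundedBilinearMap_apply.continuous.tendsto _).comp (t1.prodMk_nhds (h2t k))
  have hsumle : ∑ k, fderiv ℝ (fderiv ℝ H) a.1 (a.2 k) (a.2 k) ≤ 0 := by
    apply le_of_tendsto_of_tendsto' hsumt hrate
    intro l
    exact le_trans (le_of_lt (hp4 (φ l))) (hratebig l)
  -- contradiction with comparison property at a.1
  have hfr : Module.finrank ℝ (Submodule.span ℝ (Set.range a.2)) = n := by
    rw [finrank_span_eq_card haon.linearIndependent]; simp
  have hker' : ∀ v ∈ Submodule.span ℝ (Set.range a.2), fderivWithin ℝ H U a.1 v = 0 := by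
    intro v hv
    rw [fderivWithin_of_isOpen hU haU]
    have hsub : Set.range a.2 ⊆ (LinearMap.ker (fderiv ℝ H a.1 : Euc (n + m) →ₗ[ℝ] ℝ) : Set (Euc (n + m))) := by
      rintro _ ⟨k, rfl⟩
      simpa [LinearMap.mem_ker] using hker k
    have := Submodule.span_le.mpr hsub hv
    simpa [LinearMap.mem_ker] using this
  have hpos := hH.2 a.1 haU (Submodule.span ℝ (Set.range a.2)) hfr hker' a.2
    (fun k => Submodule.subset_span (Set.mem_range_self k)) haon
  have hrw : ∑ k, iteratedFDerivWithin ℝ 2 H U a.1 ![a.2 k, a.2 k]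
      = ∑ k, fderiv ℝ (fderiv ℝ H) a.1 (a.2 k) (a.2 k) := by
    apply Finset.sum_congr rfl
    intro k _
    rw [show iteratedFDerivWithin ℝ 2 H U a.1 = iteratedFDeriv ℝ 2 H a.1 from
      iteratedFDerivWithin_of_isOpen 2 hU haU, iteratedFDeriv_two_apply]
    simp
  rw [hrw] at hpos
  linarith

lemma exists_eps (n m : ℕ) (U : Set (Euc (n + m))) (hU : IsOpen U)
    (H : Euc (n + m) → ℝ) (hH : IsComparison n m U H)
    (X₀ : Euc (n + m)) (r : ℝ) (hr : 0 < r) (hball : closedBall X₀ (2 * r) ⊆ U) :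
    ∃ ε > 0, ∀ W : Set (Euc (n + m)), W ⊆ ball X₀ r → IsOpen W →
      IsComparison n m W (fun Y => H Y + ε * psiq (n + m) X₀ r Y) := by
  obtain ⟨δ, hδ, η, hη, hkey⟩ := key_lower_bound n m U hU H hH (closedBall X₀ (2 * r))
    (isCompact_closedBall _ _) hball
  set ε := min (δ / (2 * n + 2)) (η / (2 * r)) with hεdef
  have hεpos : 0 < ε := lt_min (by positivity) (by positivity)
  have hsub : ball X₀ r ⊆ closedBall X₀ (2 * r) := by
    apply ball_subset_closedBall.trans
    exact closedBall_subset_closedBall (by linarith)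
  refine ⟨ε, hεpos, ?_⟩
  intro W hWb hWo
  have hWU : W ⊆ U := fun X hX => hball (hsub (hWb hX))
  constructor
  · exact (hH.1.mono hWU).add ((contDiff_const.mul ((contDiff_psiq X₀ r).of_le (le_refl _))).contDiffOn)
  · intro X hXW L hLrank hLker e heL hone
    have hXb : X ∈ ball X₀ r := hWb hXW
    have hXK : X ∈ closedBall X₀ (2 * r) := hsub hXb
    have hXU : X ∈ U := hball hXK
    -- the gradient of H at X is small on the frame
    have hgrad : ∀ k, |fderiv ℝ H X (e k)| ≤ η := by
      intro k
      have h0 : fderivWithin ℝ (fun Y => H Y + ε * psiq (n + m) X₀ r Y) W X (e k) = 0 :=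
        hLker (e k) (heL k)
      rw [fderivWithin_of_isOpen hWo hXW] at h0
      rw [firstDeriv_Hp hU hH.1 X₀ r ε hXU] at h0
      simp only [ContinuousLinearMap.add_apply, ContinuousLinearMap.smul_apply,
        ContinuousLinearMap.neg_apply, Mbil_apply, smul_eq_mul] at h0
      have heq : fderiv ℝ H X (e k) = ε * (2 * (inner ℝ (X - X₀) (e k) : ℝ)) := by linarith
      rw [heq]
      have hinner : |(inner ℝ (X - X₀) (e k) : ℝ)| ≤ r := by
        calc |(inner ℝ (X - X₀) (e k) : ℝ)| ≤ ‖X - X₀‖ * ‖e k‖ := abs_real_inner_le_norm _ _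
          _ = ‖X - X₀‖ := by rw [hone.1 k, mul_one]
          _ ≤ r := by
            have := mem_ball_iff_norm.mp hXb
            linarith
      have hεr : ε * (2 * r) ≤ η := by
        have h1 : ε ≤ η / (2 * r) := min_le_right _ _
        rw [le_div_iff₀ (by positivity)] at h1
        linarith
      rw [abs_mul, abs_of_pos hεpos, abs_mul, abs_of_pos (by norm_num : (0:ℝ) < 2)]
      nlinarith [abs_nonneg (inner ℝ (X - X₀) (e k) : ℝ)]
    have hkey' := hkey X hXK e hone hgrad
    -- rewrite the conclusion
    have hrw : ∀ k, iteratedFDerivWithin ℝ 2 (fun Y => H Y + ε * psiq (n + m) X₀ r Y) W X ![e k, e k]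
        = fderiv ℝ (fderiv ℝ H) X (e k) (e k) - ε * 2 := by
      intro k
      rw [show iteratedFDerivWithin ℝ 2 (fun Y => H Y + ε * psiq (n + m) X₀ r Y) W X
          = iteratedFDeriv ℝ 2 (fun Y => H Y + ε * psiq (n + m) X₀ r Y) X from
        iteratedFDerivWithin_of_isOpen 2 hWo hXW, iteratedFDeriv_two_apply]
      rw [secondDeriv_Hp hU hH.1 X₀ r ε hXU]
      simp only [Matrix.cons_val_zero, Matrix.cons_val_one, Matrix.head_cons,
        ContinuousLinearMap.add_apply, ContinuousLinearMap.smul_apply,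
        ContinuousLinearMap.neg_apply, Mbil_apply, smul_eq_mul]
      have : (inner ℝ (e k) (e k) : ℝ) = 1 := by
        rw [real_inner_self_eq_norm_sq, hone.1 k]; norm_num
      rw [this]; ring
    have hsum : ∑ k, iteratedFDerivWithin ℝ 2 (fun Y => H Y + ε * psiq (n + m) X₀ r Y) W X ![e k, e k]
        = (∑ k, fderiv ℝ (fderiv ℝ H) X (e k) (e k)) - n * (ε * 2) := by
      rw [Finset.sum_congr rfl (fun k _ => hrw k), Finset.sum_sub_distrib]
      simp [Finset.card_univ]
    rw [hsum]
    have hεδ : (n : ℝ) * (ε * 2) < δ := by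
      have h1 : ε ≤ δ / (2 * n + 2) := min_le_left _ _
      rw [le_div_iff₀ (by positivity)] at h1
      nlinarith [Nat.cast_nonneg (α := ℝ) n]
    linarith

@[simp] lemma pairPt_castAdd (n m : ℕ) (x : Euc n) (z : Euc m) (j : Fin n) :
    pairPt n m x z (Fin.castAdd m j) = x j := by
  simp [pairPt]

@[simp] lemma pairPt_natAdd (n m : ℕ) (x : Euc n) (z : Euc m) (j : Fin m) :
    pairPt n m x z (Fin.natAdd n j) = z j := by
  simp [pairPt]

lemma pairPt_sub (n m : ℕ) (x x' : Euc n) (z z' : Euc m) :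
    pairPt n m x z - pairPt n m x' z' = pairPt n m (x - x') (z - z') := by
  ext i
  refine Fin.addCases (fun j => ?_) (fun j => ?_) i <;> simp [pairPt]

lemma pairPt_norm_sq (n m : ℕ) (x : Euc n) (z : Euc m) :
    ‖pairPt n m x z‖ ^ 2 = ‖x‖ ^ 2 + ‖z‖ ^ 2 := by
  have h := EuclideanSpace.norm_eq (pairPt n m x z)
  rw [EuclideanSpace.norm_eq x, EuclideanSpace.norm_eq z, h]
  rw [Real.sq_sqrt (by positivity), Real.sq_sqrt (by positivity), Real.sq_sqrt (by positivity)]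
  rw [Fin.sum_univ_add]
  congr 1 <;> { apply Finset.sum_congr rfl; intro j _; simp [pairPt] }

lemma pairPt_xnorm_le (n m : ℕ) (x x' : Euc n) (z z' : Euc m) :
    ‖x - x'‖ ≤ ‖pairPt n m x z - pairPt n m x' z'‖ := by
  rw [pairPt_sub]
  rw [← Real.sqrt_sq (norm_nonneg (x - x')),
    ← Real.sqrt_sq (norm_nonneg (pairPt n m (x - x') (z - z')))]
  apply Real.sqrt_le_sqrt
  rw [pairPt_norm_sq]
  nlinarith [sq_nonneg ‖z - z'‖]

lemma pairPt_dist_same (n m : ℕ) (x : Euc n) (z z' : Euc m) :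
    ‖pairPt n m x z - pairPt n m x z'‖ = ‖z - z'‖ := by
  rw [pairPt_sub]
  have h : ‖pairPt n m (x - x) (z - z')‖ ^ 2 = ‖z - z'‖ ^ 2 := by
    rw [pairPt_norm_sq]; simp
  nlinarith [norm_nonneg (pairPt n m (x - x) (z - z')), norm_nonneg (z - z')]

lemma continuous_pairPt (n m : ℕ) :
    Continuous (fun p : Euc n × Euc m => pairPt n m p.1 p.2) := by
  have : Continuous (fun p : Euc n × Euc m => (fun i => pairPt n m p.1 p.2 i : Fin (n+m) → ℝ)) := by
    apply continuous_pi
    intro i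
    refine Fin.addCases (fun j => ?_) (fun j => ?_) i
    · simp only [pairPt_castAdd]
      exact (EuclideanSpace.proj j).continuous.comp continuous_fst
    · simp only [pairPt_natAdd]
      exact (EuclideanSpace.proj j).continuous.comp continuous_snd
  -- EuclideanSpace has the pi topology
  rw [show (fun p : Euc n × Euc m => pairPt n m p.1 p.2)
      = (EuclideanSpace.equiv (Fin (n+m)) ℝ).symm ∘ (fun p : Euc n × Euc m => (fun i => pairPt n m p.1 p.2 i : Fin (n+m) → ℝ)) from rfl]
  exact (EuclideanSpace.equiv (Fin (n+m)) ℝ).symm.continuous.comp this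

end Aux

set_option maxHeartbeats 2000000 in
/-- **Stability.** If viscosity solutions `u k` of the minimal surface system on an open set
`Ω ⊆ ℝⁿ` converge uniformly on every compact subset of `Ω` to a continuous map `u`, then
`u` is a viscosity solution as well. -/
theorem viscosity_stability (n m : ℕ) (Ω : Set (Euc n)) (hΩ : IsOpen Ω)
    (uk : ℕ → Euc n → Euc m) (huk : ∀ k, IsViscositySolution n m Ω (uk k))
    (u : Euc n → Euc m) (hu : ContinuousOn u Ω)
    (hconv : ∀ K : Set (Euc n), K ⊆ Ω → IsCompact K →
      TendstoUniformlyOn uk u Filter.atTop K) :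
    IsViscositySolution n m Ω u := by
  refine ⟨hu, ?_⟩
  intro U _ hUopen H hH c
  rintro ⟨X₀, ⟨hX₀Γ, hX₀U⟩, hHc, hmaxΓ⟩
  simp only [graphSet, Set.mem_image] at hX₀Γ
  obtain ⟨x₀, hx₀Ω, hX₀eq⟩ := hX₀Γ
  have hX₀eq' : pairPt n m x₀ (u x₀) = X₀ := hX₀eq
  subst hX₀eq'
  set X₀ := pairPt n m x₀ (u x₀) with hX₀def
  -- choose radius r
  obtain ⟨r₁, hr₁pos, hr₁⟩ := Metric.isOpen_iff.mp hUopen X₀ hX₀U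
  obtain ⟨r₂, hr₂pos, hr₂⟩ := Metric.isOpen_iff.mp hΩ x₀ hx₀Ω
  set r := min r₁ r₂ / 4 with hrdef
  have hrpos : 0 < r := by positivity
  have hball2r : closedBall X₀ (2 * r) ⊆ U := by
    refine subset_trans (closedBall_subset_ball ?_) hr₁
    have : min r₁ r₂ ≤ r₁ := min_le_left _ _
    rw [hrdef]; linarith
  have hballx : closedBall x₀ r ⊆ Ω := by
    refine subset_trans (closedBall_subset_ball ?_) hr₂
    have : min r₁ r₂ ≤ r₂ := min_le_right _ _
    rw [hrdef]; linarith
  -- perturbation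
  obtain ⟨ε, hεpos, hcomp⟩ := exists_eps n m U hUopen H hH X₀ r hrpos hball2r
  set H' := fun Y => H Y + ε * psiq (n + m) X₀ r Y with hH'def
  set κ := ε * r ^ 2 / 16 with hκdef
  have hκpos : 0 < κ := by positivity
  -- uniform continuity of H' on the closed ball of radius 2r
  have hH'cont : ContinuousOn H' (closedBall X₀ (2 * r)) := by
    apply ContinuousOn.add (hH.1.continuousOn.mono hball2r)
    exact (continuous_const.mul (contDiff_psiq X₀ r).continuous).continuousOn
  have hUC := (isCompact_closedBall X₀ (2 * r)).uniformContinuousOn_of_continuous hH'cont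
  rw [Metric.uniformContinuousOn_iff] at hUC
  obtain ⟨σ₀, hσ₀pos, hσ₀⟩ := hUC (κ / 4) (by positivity)
  set σ := min (σ₀ / 2) (r / 4) with hσdef
  have hσpos : 0 < σ := lt_min (by positivity) (by positivity)
  have hσr : σ ≤ r / 4 := min_le_right _ _
  have hmod : ∀ X ∈ closedBall X₀ (2 * r), ∀ Y ∈ closedBall X₀ (2 * r),
      dist X Y ≤ σ → |H' X - H' Y| ≤ κ / 4 := by
    intro X hX Y hY hd
    have h1 : dist X Y < σ₀ := lt_of_le_of_lt hd (lt_of_le_of_lt (min_le_left _ _) (by linarith))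
    have := hσ₀ X hX Y hY h1
    rw [Real.dist_eq] at this
    linarith
  -- uniform convergence: choose k
  have hTU := hconv (closedBall x₀ r) hballx (isCompact_closedBall _ _)
  rw [Metric.tendstoUniformlyOn_iff] at hTU
  obtain ⟨k, hk⟩ := (hTU σ hσpos).exists
  -- the graph map of uk k
  set F := fun x => pairPt n m x (uk k x) with hFdef
  have hFcont : ContinuousOn F Ω :=
    (continuous_pairPt n m).comp_continuousOn (continuousOn_id.prodMk (huk k).1)
  -- the compact set A
  set A := closedBall x₀ r ∩ F ⁻¹' closedBall X₀ (3 / 4 * r) with hAdef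
  have hAsubΩ : A ⊆ Ω := fun x hx => hballx hx.1
  have hAclosed : IsClosed A :=
    (hFcont.mono hballx).preimage_isClosed_of_isClosed isClosed_closedBall isClosed_closedBall
  have hAcomp : IsCompact A :=
    (isCompact_closedBall x₀ r).of_isClosed_subset hAclosed Set.inter_subset_left
  -- x₀ ∈ A
  have hFx₀dist : dist (F x₀) X₀ < σ := by
    rw [hFdef, hX₀def, dist_eq_norm, pairPt_dist_same, ← dist_eq_norm]
    rw [dist_comm]
    exact hk x₀ (mem_closedBall_self hrpos.le)
  have hx₀A : x₀ ∈ A := by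
    constructor
    · exact mem_closedBall_self hrpos.le
    · simp only [Set.mem_preimage, mem_closedBall]
      linarith
  -- maximum of H' ∘ F over A
  have hFA : ∀ x ∈ A, F x ∈ closedBall X₀ (2 * r) := by
    intro x hx
    have := hx.2
    simp only [Set.mem_preimage, mem_closedBall] at this
    simp only [mem_closedBall]
    linarith
  have hcontHF : ContinuousOn (H' ∘ F) A :=
    hH'cont.comp (hFcont.mono hAsubΩ) hFA
  obtain ⟨a, haA, hamax⟩ := hAcomp.exists_isMaxOn ⟨x₀, hx₀A⟩ hcontHF
  have hamax' : ∀ x ∈ A, H' (F x) ≤ H' (F a) := fun x hx => hamax hx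
  -- value at the center
  have hψX₀ : psiq (n + m) X₀ r X₀ = r ^ 2 := by
    rw [psiq_eq_norm]; simp
  have hH'X₀ : H' X₀ = c + ε * r ^ 2 := by
    show H X₀ + ε * psiq (n + m) X₀ r X₀ = c + ε * r ^ 2
    rw [hψX₀, hHc]
  -- center lower bound for the max value
  have hcen : c + ε * r ^ 2 - κ / 4 ≤ H' (F a) := by
    have h1 : |H' (F x₀) - H' X₀| ≤ κ / 4 :=
      hmod (F x₀) (hFA x₀ hx₀A) X₀ (mem_closedBall_self (by positivity)) hFx₀dist.le
    have h2 : H' (F x₀) ≤ H' (F a) := hamax' x₀ hx₀A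
    have h3 := (abs_le.mp h1).1
    rw [hH'X₀] at h3
    clear_value A F H' κ σ X₀ r
    linarith
  -- far points are small
  have hfar : ∀ x ∈ A, r / 2 ≤ dist (F x) X₀ → H' (F x) ≤ c + ε * r ^ 2 - 3 / 4 * κ := by
    intro x hxA hd
    set Y := pairPt n m x (u x) with hYdef
    have hxball : x ∈ closedBall x₀ r := hxA.1
    have hFYdist : dist (F x) Y < σ := by
      rw [hFdef, hYdef, dist_eq_norm, pairPt_dist_same, ← dist_eq_norm, dist_comm]
      exact hk x hxball
    have hFxK : F x ∈ closedBall X₀ (2 * r) := hFA x hxA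
    have hFxK' : dist (F x) X₀ ≤ 3 / 4 * r := by
      have := hxA.2; simp only [Set.mem_preimage, mem_closedBall] at this; exact this
    have hYK : Y ∈ closedBall X₀ (2 * r) := by
      simp only [mem_closedBall]
      calc dist Y X₀ ≤ dist Y (F x) + dist (F x) X₀ := dist_triangle _ _ _
        _ ≤ σ + 3 / 4 * r := by rw [dist_comm]; linarith
        _ ≤ 2 * r := by linarith
    have hYU : Y ∈ U := hball2r hYK
    have hYΓ : Y ∈ graphSet n m Ω u := ⟨x, hballx hxball, rfl⟩
    have hHY : H Y ≤ c := hmaxΓ Y ⟨hYΓ, hYU⟩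
    have hYfar : r / 4 ≤ dist Y X₀ := by
      have h5 : dist (F x) X₀ ≤ dist (F x) Y + dist Y X₀ := dist_triangle _ _ _
      linarith
    have hψY : psiq (n + m) X₀ r Y ≤ r ^ 2 - r ^ 2 / 16 := by
      rw [psiq_eq_norm]
      have h1 : r / 4 ≤ ‖Y - X₀‖ := by rw [← dist_eq_norm]; exact hYfar
      nlinarith [sq_nonneg (‖Y - X₀‖ - r / 4)]
    have hH'Y : H' Y ≤ c + ε * r ^ 2 - κ := by
      show H Y + ε * psiq (n + m) X₀ r Y ≤ c + ε * r ^ 2 - κ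
      rw [hκdef]
      have key2 : ∀ p q : ℝ, p ≤ c → q ≤ r ^ 2 - r ^ 2 / 16 → 0 < ε →
          p + ε * q ≤ c + ε * r ^ 2 - ε * r ^ 2 / 16 := by
        intro p q h1 h2 h3; nlinarith
      exact key2 _ _ hHY hψY hεpos
    have hmod' : |H' (F x) - H' Y| ≤ κ / 4 := hmod (F x) hFxK Y hYK hFYdist.le
    have h6 := (abs_le.mp hmod').2
    have key : ∀ p q : ℝ, q ≤ c + ε * r ^ 2 - κ → p - q ≤ κ / 4 → 0 < κ →
        p ≤ c + ε * r ^ 2 - 3 / 4 * κ := by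
      intro p q hq hpq hκ; linarith
    exact key _ _ hH'Y h6 hκpos
  -- the maximum point is near the center
  have hanear : dist (F a) X₀ < r / 2 := by
    by_contra hcon
    push_neg at hcon
    have h7 := hfar a haA hcon
    have key : ∀ p : ℝ, p ≤ c + ε * r ^ 2 - 3 / 4 * κ → c + ε * r ^ 2 - κ / 4 ≤ p → 0 < κ →
        False := by
      intro p h1 h2 hκ; linarith
    exact key _ h7 hcen hκpos
  -- contradiction with the viscosity property of uk k
  have hcmp' := hcomp (ball X₀ (r / 2)) (ball_subset_ball (by linarith)) isOpen_ball
  apply (huk k).2 (ball X₀ (r / 2)) (Set.subset_univ _) isOpen_ball H' hcmp' (H' (F a))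
  refine ⟨F a, ⟨⟨a, hAsubΩ haA, rfl⟩, ?_⟩, rfl, ?_⟩
  · simpa [mem_ball] using hanear
  · rintro X ⟨hXΓ, hXball⟩
    simp only [graphSet, Set.mem_image] at hXΓ
    obtain ⟨y, hyΩ, hXeq⟩ := hXΓ
    have hXeq' : pairPt n m y (uk k y) = X := hXeq
    subst hXeq'
    have hdX : dist (F y) X₀ < r / 2 := by simpa [mem_ball] using hXball
    have hyA : y ∈ A := by
      constructor
      · simp only [mem_closedBall]
        have h1 : ‖y - x₀‖ ≤ ‖F y - X₀‖ := by
          rw [hFdef, hX₀def]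
          exact pairPt_xnorm_le n m y x₀ (uk k y) (u x₀)
        rw [dist_eq_norm]
        rw [dist_eq_norm] at hdX
        linarith
      · simp only [Set.mem_preimage, mem_closedBall]
        linarith
    exact hamax' y hyA
end
end

section
/- Let n, m ≥ 1 and K > 0. There exist constants c₀ > 0 and ε₀ > 0, depending only on n, m and K, with the following property. Let l(x) = b + Ax be an affine map from ℝⁿ to ℝᵐ with |A| ≤ K, let 0 < ε ≤ ε₀, and let φ : B₁ⁿ → ℝ be a C² function with ‖φ‖_{C^{1,1}} ≤ 1 and M⁺_{c₀,1}(D²φ(x)) < 0 for all x ∈ B₁ⁿ. Then the function H(x,z) := |z − l(x)| − εφ(x) is a comparison function for the minimal surface system in the open set {(x,z) : x ∈ B₁ⁿ, 0 < |z − l(x)| < ε}. -/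
open Set Metric MeasureTheory

noncomputable section

namespace CompAux
open RealInnerProductSpace

def xC (n m : ℕ) : Euc (n + m) →L[ℝ] Euc n :=
  LinearMap.toContinuousLinearMap
    { toFun := xPart n m
      map_add' := fun _ _ => rfl
      map_smul' := fun _ _ => rfl }

def zC (n m : ℕ) : Euc (n + m) →L[ℝ] Euc m :=
  LinearMap.toContinuousLinearMap
    { toFun := zPart n m
      map_add' := fun _ _ => rfl
      map_smul' := fun _ _ => rfl }

@[simp] lemma xC_apply {n m : ℕ} (X : Euc (n + m)) : xC n m X = xPart n m X := rfl
@[simp] lemma zC_apply {n m : ℕ} (X : Euc (n + m)) : zC n m X = zPart n m X := rfl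


lemma inner_split {n m : ℕ} (X Y : Euc (n + m)) :
    ⟪X, Y⟫ = ⟪xPart n m X, xPart n m Y⟫ + ⟪zPart n m X, zPart n m Y⟫ := by
  simp only [PiLp.inner_apply, RCLike.inner_apply, starRingEnd_apply, star_trivial]
  rw [Fin.sum_univ_add]
  rfl

lemma norm_sq_split {n m : ℕ} (X : Euc (n + m)) :
    ‖X‖ ^ 2 = ‖xPart n m X‖ ^ 2 + ‖zPart n m X‖ ^ 2 := by
  rw [← real_inner_self_eq_norm_sq, ← real_inner_self_eq_norm_sq,
    ← real_inner_self_eq_norm_sq, inner_split]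

@[simp] lemma xPart_pairPt {n m : ℕ} (u : Euc n) (z : Euc m) :
    xPart n m (pairPt n m u z) = u := by
  ext i
  simp [xPart, pairPt]

@[simp] lemma zPart_pairPt {n m : ℕ} (u : Euc n) (z : Euc m) :
    zPart n m (pairPt n m u z) = z := by
  ext i
  simp [zPart, pairPt]

lemma inner_pairPt {n m : ℕ} (u : Euc n) (Y : Euc (n + m)) :
    ⟪pairPt n m u 0, Y⟫ = ⟪u, xPart n m Y⟫ := by
  rw [inner_split]
  simp

lemma hasFDerivAt_norm_of_ne {E : Type*} [NormedAddCommGroup E] [InnerProductSpace ℝ E]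
    {w : E} (hw : w ≠ 0) :
    HasFDerivAt (fun y : E => ‖y‖) (‖w‖⁻¹ • (innerSL ℝ w)) w := by
  have h0 : ⟪w, w⟫ ≠ 0 := by
    rw [real_inner_self_eq_norm_sq]
    exact pow_ne_zero _ (norm_ne_zero_iff.mpr hw)
  have h1 : HasFDerivAt (fun y : E => ⟪y, y⟫)
      ((fderivInnerCLM ℝ (w, w)).comp
        ((ContinuousLinearMap.id ℝ E).prod (ContinuousLinearMap.id ℝ E))) w :=
    (hasFDerivAt_id w).inner ℝ (hasFDerivAt_id w)
  have h2 := HasDerivAt.comp_hasFDerivAt (f := fun y : E => ⟪y, y⟫) w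
    (Real.hasDerivAt_sqrt h0) h1
  have hfun : (Real.sqrt ∘ fun y : E => ⟪y, y⟫) = fun y : E => ‖y‖ := by
    funext y
    simp only [Function.comp_apply, real_inner_self_eq_norm_mul_norm,
      Real.sqrt_mul_self (norm_nonneg y)]
  rw [hfun] at h2
  refine h2.congr_fderiv ?_
  ext a
  have hs : Real.sqrt ⟪w, w⟫ = ‖w‖ := by
    rw [real_inner_self_eq_norm_mul_norm, Real.sqrt_mul_self (norm_nonneg w)]
  simp only [ContinuousLinearMap.smul_apply, innerSL_apply_apply, ContinuousLinearMap.coe_smul',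
    Pi.smul_apply, ContinuousLinearMap.coe_comp', Function.comp_apply,
    ContinuousLinearMap.prod_apply, ContinuousLinearMap.coe_id', id_eq,
    fderivInnerCLM_apply, smul_eq_mul, hs]
  rw [real_inner_comm a w]
  have : ‖w‖ ≠ 0 := norm_ne_zero_iff.mpr hw
  field_simp
  ring

section Main

variable (n m : ℕ) (b : Euc m) (A : Euc n →L[ℝ] Euc m) (ε : ℝ) (φ : Euc n → ℝ)

def Tm : Euc (n + m) →L[ℝ] Euc m := zC n m - A.comp (xC n m)

lemma Tm_apply (X : Euc (n + m)) : Tm n m A X = zPart n m X - A (xPart n m X) := by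
  simp [Tm]

lemma gdef (X : Euc (n + m)) :
    zPart n m X - (b + A (xPart n m X)) = Tm n m A X - b := by
  rw [Tm_apply]
  abel

def Uset : Set (Euc (n + m)) :=
  {X : Euc (n + m) | xPart n m X ∈ ball 0 1 ∧
    0 < ‖zPart n m X - (b + A (xPart n m X))‖ ∧
    ‖zPart n m X - (b + A (xPart n m X))‖ < ε}

def Hfun : Euc (n + m) → ℝ :=
  fun X => ‖zPart n m X - (b + A (xPart n m X))‖ - ε * φ (xPart n m X)

lemma isOpen_Uset : IsOpen (Uset n m b A ε) := by
  have hx : Continuous fun X : Euc (n + m) => xPart n m X := (xC n m).continuous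
  have hz : Continuous fun X : Euc (n + m) => zPart n m X := (zC n m).continuous
  have hcont : Continuous fun X : Euc (n + m) =>
      ‖zPart n m X - (b + A (xPart n m X))‖ :=
    (hz.sub (continuous_const.add (A.continuous.comp hx))).norm
  have : Uset n m b A ε = (fun X : Euc (n + m) => xPart n m X) ⁻¹' (ball 0 1) ∩
      ((fun X : Euc (n + m) => ‖zPart n m X - (b + A (xPart n m X))‖) ⁻¹' (Ioi 0) ∩
       (fun X : Euc (n + m) => ‖zPart n m X - (b + A (xPart n m X))‖) ⁻¹' (Iio ε)) := by
    ext X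
    simp [Uset, and_assoc]
  rw [this]
  exact (isOpen_ball.preimage hx).inter
    ((isOpen_Ioi.preimage hcont).inter (isOpen_Iio.preimage hcont))

def D1 (y : Euc (n + m)) : Euc (n + m) →L[ℝ] ℝ :=
  ‖Tm n m A y - b‖⁻¹ • ((innerSL ℝ (Tm n m A y - b)).comp (Tm n m A)) -
    ε • ((fderiv ℝ φ (xPart n m y)).comp (xC n m))

lemma D1_apply (y v : Euc (n + m)) :
    D1 n m b A ε φ y v = ‖Tm n m A y - b‖⁻¹ * ⟪Tm n m A y - b, Tm n m A v⟫ -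
      ε * fderiv ℝ φ (xPart n m y) (xPart n m v) := by
  simp only [D1, ContinuousLinearMap.sub_apply, ContinuousLinearMap.smul_apply,
    ContinuousLinearMap.coe_comp', Function.comp_apply, innerSL_apply_apply, smul_eq_mul, xC_apply]

variable {n m b A ε φ}

lemma wne {y : Euc (n + m)} (hy : y ∈ Uset n m b A ε) : Tm n m A y - b ≠ 0 := by
  have := hy.2.1
  rw [gdef] at this
  exact norm_pos_iff.mp this

lemma Hfun_eq : Hfun n m b A ε φ = fun X => ‖Tm n m A X - b‖ - ε * φ (xPart n m X) := by
  funext X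
  rw [Hfun, gdef]

lemma hasFDerivAt_Hfun (hφ : ContDiffOn ℝ 2 φ (ball 0 1)) {y : Euc (n + m)}
    (hy : y ∈ Uset n m b A ε) : HasFDerivAt (Hfun n m b A ε φ) (D1 n m b A ε φ y) y := by
  have hw : Tm n m A y - b ≠ 0 := wne hy
  have h1 : HasFDerivAt (fun X : Euc (n + m) => Tm n m A X - b) (Tm n m A) y :=
    (Tm n m A).hasFDerivAt.sub_const b
  have h2 : HasFDerivAt (fun X : Euc (n + m) => ‖Tm n m A X - b‖)
      ((‖Tm n m A y - b‖⁻¹ • (innerSL ℝ (Tm n m A y - b))).comp (Tm n m A)) y :=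
    (hasFDerivAt_norm_of_ne hw).comp y h1
  have hφat : ContDiffAt ℝ 2 φ (xPart n m y) := hφ.contDiffAt (isOpen_ball.mem_nhds hy.1)
  have h3 : HasFDerivAt (fun X : Euc (n + m) => φ (xPart n m X))
      ((fderiv ℝ φ (xPart n m y)).comp (xC n m)) y :=
    ((hφat.differentiableAt (by norm_num)).hasFDerivAt).comp y (xC n m).hasFDerivAt
  have h4 := h2.sub (h3.const_mul ε)
  rw [Hfun_eq]
  exact h4

lemma contDiffAt_Hfun (hφ : ContDiffOn ℝ 2 φ (ball 0 1)) {y : Euc (n + m)}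
    (hy : y ∈ Uset n m b A ε) : ContDiffAt ℝ 2 (Hfun n m b A ε φ) y := by
  have hw : Tm n m A y - b ≠ 0 := wne hy
  rw [Hfun_eq]
  have hnorm : ContDiffAt ℝ 2 (fun X : Euc (n + m) => ‖Tm n m A X - b‖) y :=
    (contDiffAt_norm (𝕜 := ℝ) hw).comp y (((Tm n m A).contDiff.sub contDiff_const).contDiffAt)
  have hphi : ContDiffAt ℝ 2 (fun X : Euc (n + m) => φ (xPart n m X)) y :=
    (hφ.contDiffAt (isOpen_ball.mem_nhds hy.1)).comp y (xC n m).contDiff.contDiffAt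
  exact hnorm.sub (contDiffAt_const.mul hphi)

lemma secondDeriv_Hfun (hφ : ContDiffOn ℝ 2 φ (ball 0 1)) {X : Euc (n + m)}
    (hX : X ∈ Uset n m b A ε) (v : Euc (n + m)) :
    iteratedFDerivWithin ℝ 2 (Hfun n m b A ε φ) (Uset n m b A ε) X ![v, v] =
      ‖Tm n m A X - b‖⁻¹ * ‖Tm n m A v‖ ^ 2
        - ‖Tm n m A X - b‖⁻¹ ^ 3 * ⟪Tm n m A X - b, Tm n m A v⟫ ^ 2
        - ε * fderiv ℝ (fderiv ℝ φ) (xPart n m X) (xPart n m v) (xPart n m v) := by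
  have hU := isOpen_Uset n m b A ε
  have hw : Tm n m A X - b ≠ 0 := wne hX
  have hr : ‖Tm n m A X - b‖ ≠ 0 := norm_ne_zero_iff.mpr hw
  rw [iteratedFDerivWithin_of_isOpen 2 hU hX, iteratedFDeriv_two_apply]
  have hdiff : DifferentiableAt ℝ (fderiv ℝ (Hfun n m b A ε φ)) X :=
    ((contDiffAt_Hfun hφ hX).fderiv_right (m := 1) (by norm_num)).differentiableAt (by norm_num)
  have e1 : fderiv ℝ (fun y => fderiv ℝ (Hfun n m b A ε φ) y v) X v
      = fderiv ℝ (fderiv ℝ (Hfun n m b A ε φ)) X v v := by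
    rw [fderiv_clm_apply hdiff (differentiableAt_const v)]
    simp
  simp only [Matrix.cons_val_zero, Matrix.cons_val_one, Matrix.head_cons]
  rw [← e1]
  have heq : (fun y => fderiv ℝ (Hfun n m b A ε φ) y v)
      =ᶠ[nhds X] (fun y => D1 n m b A ε φ y v) := by
    filter_upwards [hU.mem_nhds hX] with y hy
    rw [(hasFDerivAt_Hfun hφ hy).fderiv]
  rw [heq.fderiv_eq]
  have hfe : (fun y => D1 n m b A ε φ y v)
      = fun y => ‖Tm n m A y - b‖⁻¹ * ⟪Tm n m A y - b, Tm n m A v⟫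
          - ε * (fderiv ℝ φ (xPart n m y) (xPart n m v)) := by
    funext y
    rw [D1_apply]
  have h1 : HasFDerivAt (fun X : Euc (n + m) => Tm n m A X - b) (Tm n m A) X :=
    (Tm n m A).hasFDerivAt.sub_const b
  have ha : HasFDerivAt (fun y : Euc (n + m) => ⟪Tm n m A y - b, Tm n m A v⟫)
      ((fderivInnerCLM ℝ (Tm n m A X - b, Tm n m A v)).comp ((Tm n m A).prod 0)) X :=
    h1.inner ℝ (hasFDerivAt_const (Tm n m A v) X)
  have hb : HasFDerivAt (fun y : Euc (n + m) => ‖Tm n m A y - b‖)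
      ((‖Tm n m A X - b‖⁻¹ • (innerSL ℝ (Tm n m A X - b))).comp (Tm n m A)) X :=
    (hasFDerivAt_norm_of_ne hw).comp X h1
  have hbinv : HasFDerivAt (fun y : Euc (n + m) => ‖Tm n m A y - b‖⁻¹)
      ((-(‖Tm n m A X - b‖ ^ 2)⁻¹) •
        ((‖Tm n m A X - b‖⁻¹ • (innerSL ℝ (Tm n m A X - b))).comp (Tm n m A))) X :=
    HasDerivAt.comp_hasFDerivAt (f := fun y : Euc (n + m) => ‖Tm n m A y - b‖) X
      (hasDerivAt_inv hr) hb
  have hmul := hbinv.mul ha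
  have hφat : ContDiffAt ℝ 2 φ (xPart n m X) := hφ.contDiffAt (isOpen_ball.mem_nhds hX.1)
  have hφ2 : HasFDerivAt (fderiv ℝ φ) (fderiv ℝ (fderiv ℝ φ) (xPart n m X)) (xPart n m X) :=
    (((hφat.fderiv_right (m := 1) (by norm_num)).differentiableAt (by norm_num))).hasFDerivAt
  have h5 : HasFDerivAt (fun u : Euc n => fderiv ℝ φ u (xPart n m v))
      ((fderiv ℝ (fderiv ℝ φ) (xPart n m X)).flip (xPart n m v)) (xPart n m X) := by
    have := hφ2.clm_apply (hasFDerivAt_const (xPart n m v) (xPart n m X))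
    simpa using this
  have h6 : HasFDerivAt (fun y : Euc (n + m) => fderiv ℝ φ (xPart n m y) (xPart n m v))
      (((fderiv ℝ (fderiv ℝ φ) (xPart n m X)).flip (xPart n m v)).comp (xC n m)) X :=
    h5.comp X (xC n m).hasFDerivAt
  have htot := hmul.sub (h6.const_mul ε)
  rw [hfe]
  erw [htot.fderiv]
  simp only [ContinuousLinearMap.sub_apply, ContinuousLinearMap.add_apply,
    ContinuousLinearMap.smul_apply, ContinuousLinearMap.coe_comp', Function.comp_apply,
    ContinuousLinearMap.prod_apply, ContinuousLinearMap.zero_apply, fderivInnerCLM_apply,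
    innerSL_apply_apply, smul_eq_mul, inner_zero_right, ContinuousLinearMap.flip_apply, xC_apply,
    real_inner_self_eq_norm_sq, zero_add]
  ring

end Main
lemma single_expand {n : ℕ} (u : Euc n) :
    ∑ i, u i • EuclideanSpace.single i (1 : ℝ) = u := by
  have h := (EuclideanSpace.basisFun (Fin n) ℝ).sum_repr u
  simp only [EuclideanSpace.basisFun_repr, EuclideanSpace.basisFun_apply] at h
  exact h

lemma sum_quadform_le_pucci {n : ℕ} {N' : ℕ} (φ : Euc n → ℝ)
    (hφ : ContDiffOn ℝ 2 φ (ball 0 1)) {x0 : Euc n} (hx0 : x0 ∈ ball (0 : Euc n) 1)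
    {c₀ : ℝ} (v : Fin N' → Euc n)
    (hql : ∀ u : Euc n, ‖u‖ = 1 → c₀ ≤ ∑ k, ⟪u, v k⟫ ^ 2)
    (hqu : ∀ u : Euc n, ‖u‖ = 1 → ∑ k, ⟪u, v k⟫ ^ 2 ≤ 1) :
    ∑ k, fderiv ℝ (fderiv ℝ φ) x0 (v k) (v k) ≤
      pucciPlus c₀ 1 (hessWithin n (ball 0 1) φ x0) := by
  set Φ2 := fderiv ℝ (fderiv ℝ φ) x0 with hΦ2
  set N := hessWithin n (ball 0 1) φ x0 with hNdef
  have hNentry : ∀ i j, N i j = Φ2 (EuclideanSpace.single i 1) (EuclideanSpace.single j 1) := by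
    intro i j
    rw [hNdef]
    show iteratedFDerivWithin ℝ 2 φ (ball 0 1) x0 _ = _
    rw [iteratedFDerivWithin_of_isOpen 2 isOpen_ball hx0, iteratedFDeriv_two_apply]
    simp
    rfl
  have hsymm : ∀ u u' : Euc n, Φ2 u u' = Φ2 u' u := by
    intro u u'
    refine second_derivative_symmetric_of_eventually (f := φ) (f' := fderiv ℝ φ) (x := x0) ?_ ?_ u u'
    · filter_upwards [isOpen_ball.mem_nhds hx0] with y hy
      exact ((hφ.contDiffAt (isOpen_ball.mem_nhds hy)).differentiableAt
        (by norm_num)).hasFDerivAt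
    · exact ((((hφ.contDiffAt (isOpen_ball.mem_nhds hx0)).fderiv_right (m := 1)
        (by norm_num)).differentiableAt (by norm_num))).hasFDerivAt
  have hbil1 : ∀ (s : Euc n) (u' : Euc n),
      Φ2 s u' = ∑ j, u' j * Φ2 s (EuclideanSpace.single j 1) := by
    intro s u'
    conv_lhs => rw [← single_expand u']
    rw [map_sum]
    exact Finset.sum_congr rfl fun j _ => by rw [_root_.map_smul, smul_eq_mul]
  have hbil : ∀ u u' : Euc n, Φ2 u u' = ∑ i, ∑ j, u i * u' j * N i j := by
    intro u u'
    have h1 : Φ2 u u' = ∑ i, u i * Φ2 (EuclideanSpace.single i 1) u' := by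
      conv_lhs => rw [← single_expand u]
      rw [map_sum, ContinuousLinearMap.sum_apply]
      exact Finset.sum_congr rfl fun i _ => by
        rw [_root_.map_smul, ContinuousLinearMap.smul_apply, smul_eq_mul]
    rw [h1]
    refine Finset.sum_congr rfl fun i _ => ?_
    rw [hbil1, Finset.mul_sum]
    refine Finset.sum_congr rfl fun j _ => ?_
    rw [hNentry]
    ring
  have hN : N.IsHermitian := by
    show N.conjTranspose = N
    ext i j
    simp only [Matrix.conjTranspose_apply, star_trivial]
    rw [hNentry, hNentry]
    exact hsymm _ _
  set μ := hN.eigenvalues with hμ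
  set Ue := hN.eigenvectorBasis with hUe
  have hUeON : Orthonormal ℝ (⇑Ue) := Ue.orthonormal
  have hmv : ∀ (u : Euc n) (j : Fin n), ⟪u, (WithLp.toLp 2 (N.mulVec (Ue j)) : Euc n)⟫ = μ j * ⟪u, Ue j⟫ := by
    intro u j
    have h := hN.mulVec_eigenvectorBasis j
    have h' : (WithLp.toLp 2 (N.mulVec (Ue j)) : Euc n) = μ j • Ue j := congrArg (WithLp.toLp 2) h
    rw [h', real_inner_smul_right]
  have hinner_mulvec : ∀ u u' : Euc n, Φ2 u u' = ⟪u, (WithLp.toLp 2 (N.mulVec u') : Euc n)⟫ := by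
    intro u u'
    rw [hbil]
    simp only [PiLp.inner_apply, RCLike.inner_apply, starRingEnd_apply, star_trivial]
    refine Finset.sum_congr rfl fun i _ => ?_
    show ∑ j, u i * u' j * N i j = (N.mulVec u') i * u i
    simp only [Matrix.mulVec, dotProduct, Finset.sum_mul]
    exact Finset.sum_congr rfl fun j _ => by ring
  have hUeval : ∀ i j, Φ2 (Ue i) (Ue j) = μ j * (if i = j then (1:ℝ) else 0) := by
    intro i j
    rw [hinner_mulvec, hmv, orthonormal_iff_ite.mp hUeON]
  have hrep : ∀ z : Euc n, z = ∑ i, ⟪Ue i, z⟫ • Ue i := by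
    intro z
    conv_lhs => rw [← Ue.sum_repr z]
    exact Finset.sum_congr rfl fun i _ => by rw [Ue.repr_apply_apply]
  have hquad : ∀ y : Euc n, Φ2 y y = ∑ i, μ i * ⟪Ue i, y⟫ ^ 2 := by
    intro y
    conv_lhs => rw [hrep y]
    rw [map_sum]
    refine Finset.sum_congr rfl fun x _ => ?_
    rw [_root_.map_smul, smul_eq_mul]
    rw [map_sum, ContinuousLinearMap.sum_apply]
    rw [Finset.sum_eq_single x]
    · rw [_root_.map_smul, ContinuousLinearMap.smul_apply, smul_eq_mul, hUeval]
      rw [if_pos rfl, mul_one]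
      ring
    · intro i _ hix
      rw [_root_.map_smul, ContinuousLinearMap.smul_apply, smul_eq_mul, hUeval]
      simp [hix]
    · simp
  have hswap : ∑ k, Φ2 (v k) (v k) = ∑ i, μ i * ∑ k, ⟪Ue i, v k⟫ ^ 2 := by
    calc ∑ k, Φ2 (v k) (v k) = ∑ k, ∑ i, μ i * ⟪Ue i, v k⟫ ^ 2 :=
          Finset.sum_congr rfl fun k _ => hquad (v k)
      _ = ∑ i, ∑ k, μ i * ⟪Ue i, v k⟫ ^ 2 := Finset.sum_comm
      _ = ∑ i, μ i * ∑ k, ⟪Ue i, v k⟫ ^ 2 :=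
          Finset.sum_congr rfl fun i _ => (Finset.mul_sum _ _ _).symm
  have hgoal : ∑ k, Φ2 (v k) (v k) ≤ pucciPlus c₀ 1 N := by
    rw [hswap, pucciPlus, dif_pos hN, ← hμ]
    refine Finset.sum_le_sum fun i _ => ?_
    have hnorm1 : ‖Ue i‖ = 1 := hUeON.1 i
    have h1 := hql (Ue i) hnorm1
    have h2 := hqu (Ue i) hnorm1
    by_cases hμi : 0 < μ i
    · rw [if_pos hμi, one_mul]
      exact mul_le_of_le_one_right hμi.le h2
    · rw [if_neg hμi]
      push_neg at hμi
      calc μ i * ∑ k, ⟪Ue i, v k⟫ ^ 2 ≤ μ i * c₀ := mul_le_mul_of_nonpos_left h1 hμi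
        _ = c₀ * μ i := mul_comm _ _
  exact hgoal

end CompAux

lemma final_numeric (n : ℕ) (r ε σ : ℝ) (hr0 : 0 < r) (hrε : r < ε) (hε : 0 < ε)
    (hεle : ε ≤ (8 * ((n : ℝ) + 1))⁻¹) (hcase : 1 / 4 < σ) :
    0 < r⁻¹ * σ - (n : ℝ) * (r⁻¹ * ε ^ 2) - (n : ℝ) * ε := by
  have hn0 : (0 : ℝ) ≤ (n : ℝ) := Nat.cast_nonneg n
  have hpos : (0 : ℝ) < 8 * ((n : ℝ) + 1) := by positivity
  have hεinv : 8 * ((n : ℝ) + 1) ≤ ε⁻¹ := by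
    have h := inv_anti₀ hε hεle
    rwa [inv_inv] at h
  have hrinv : ε⁻¹ < r⁻¹ := inv_strictAnti₀ hr0 hrε
  have hnε : (n : ℝ) * ε ≤ 1 / 8 := by
    have h6 : (n : ℝ) * ε ≤ (n : ℝ) * (8 * ((n : ℝ) + 1))⁻¹ :=
      mul_le_mul_of_nonneg_left hεle hn0
    have h7 : (n : ℝ) * (8 * ((n : ℝ) + 1))⁻¹ ≤ 1 / 8 := by
      rw [← div_eq_mul_inv, div_le_div_iff₀ hpos (by norm_num)]
      linarith
    linarith
  have hε8 : ε ≤ 1 / 8 := by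
    have h7 : (8 * ((n : ℝ) + 1))⁻¹ ≤ 1 / 8 := by
      rw [one_div]
      exact inv_anti₀ (by norm_num) (by linarith)
    linarith
  have hσn : σ - (n : ℝ) * ε ^ 2 ≥ 1 / 8 := by
    have h11 : (n : ℝ) * ε * ε ≤ (1 / 8) * (1 / 8) :=
      mul_le_mul hnε hε8 hε.le (by norm_num)
    nlinarith
  have hεinv0 : (0 : ℝ) < ε⁻¹ := inv_pos.mpr hε
  have h8 : ε⁻¹ * (σ - (n : ℝ) * ε ^ 2) ≤ r⁻¹ * (σ - (n : ℝ) * ε ^ 2) :=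
    mul_le_mul_of_nonneg_right hrinv.le (by linarith)
  have h9 : (n : ℝ) + 1 ≤ ε⁻¹ * (1 / 8) := by linarith
  have h10 : ε⁻¹ * (1 / 8) ≤ ε⁻¹ * (σ - (n : ℝ) * ε ^ 2) :=
    mul_le_mul_of_nonneg_left hσn hεinv0.le
  have hEq : r⁻¹ * σ - (n : ℝ) * (r⁻¹ * ε ^ 2) = r⁻¹ * (σ - (n : ℝ) * ε ^ 2) := by ring
  linarith


set_option maxHeartbeats 1000000 in
open CompAux RealInnerProductSpace in
/-- **Comparison function lemma.** There are `c₀, ε₀ > 0` depending only on `n, m, K` such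
that for any affine `l(x) = b + Ax` with `|A| ≤ K`, any `0 < ε ≤ ε₀` and any `C²` function
`φ` on `B₁ⁿ` with `‖φ‖_{C^{1,1}} ≤ 1` and `M⁺_{c₀,1}(D²φ) < 0` on `B₁ⁿ`, the function
`H(x,z) = |z − l(x)| − εφ(x)` is a comparison function for the minimal surface system in
`{(x,z) : x ∈ B₁ⁿ, 0 < |z − l(x)| < ε}`. -/
theorem comparison_function_lemma (n m : ℕ) (hn : 1 ≤ n) (hm : 1 ≤ m) (K : ℝ) (hK : 0 < K) :
    ∃ c₀ > (0 : ℝ), ∃ ε₀ > (0 : ℝ),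
      ∀ (b : Euc m) (A : Euc n →L[ℝ] Euc m), ‖A‖ ≤ K →
      ∀ ε : ℝ, 0 < ε → ε ≤ ε₀ →
      ∀ φ : Euc n → ℝ, ContDiffOn ℝ 2 φ (ball 0 1) → C11Bound n (ball 0 1) φ →
        (∀ x ∈ ball (0 : Euc n) 1, pucciPlus c₀ 1 (hessWithin n (ball 0 1) φ x) < 0) →
        IsComparison n m
          {X : Euc (n + m) | xPart n m X ∈ ball 0 1 ∧
            0 < ‖zPart n m X - (b + A (xPart n m X))‖ ∧
            ‖zPart n m X - (b + A (xPart n m X))‖ < ε}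
          (fun X => ‖zPart n m X - (b + A (xPart n m X))‖ - ε * φ (xPart n m X)) := by
  classical
  refine ⟨(4 * (1 + K ^ 2))⁻¹, by positivity, (8 * ((n : ℝ) + 1))⁻¹, by positivity, ?_⟩
  intro b A hA ε hε hεle φ hφ hC11 hpucci
  show IsComparison n m (Uset n m b A ε) (Hfun n m b A ε φ)
  have hU : IsOpen (Uset n m b A ε) := isOpen_Uset n m b A ε
  constructor
  · exact fun y hy => (contDiffAt_Hfun hφ hy).contDiffWithinAt
  intro X hX L hL hker e he heon
  set x0 := xPart n m X with hx0def
  have hx0 : x0 ∈ ball (0 : Euc n) 1 := hX.1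
  set w := Tm n m A X - b with hwdef
  have hr0 : 0 < ‖w‖ := by
    have h := hX.2.1
    rwa [gdef] at h
  have hrε : ‖w‖ < ε := by
    have h := hX.2.2
    rwa [gdef] at h
  set r := ‖w‖ with hrdef
  set a : Fin n → Euc m := fun k => Tm n m A (e k) with hadef
  set vv : Fin n → Euc n := fun k => xPart n m (e k) with hvvdef
  set Φ2 := fderiv ℝ (fderiv ℝ φ) x0 with hΦ2def
  have hgoal_eq : ∑ k, iteratedFDerivWithin ℝ 2 (Hfun n m b A ε φ) (Uset n m b A ε) X ![e k, e k]
      = ∑ k, (r⁻¹ * ‖a k‖ ^ 2 - r⁻¹ ^ 3 * ⟪w, a k⟫ ^ 2 - ε * Φ2 (vv k) (vv k)) :=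
    Finset.sum_congr rfl fun k _ => secondDeriv_Hfun hφ hX (e k)
  rw [hgoal_eq]
  have hfdφ : ‖fderiv ℝ φ x0‖ ≤ 1 := by
    have h := hC11.2.1 x0 hx0
    rwa [fderivWithin_of_isOpen isOpen_ball hx0] at h
  have hΦnorm : ∀ u u' : Euc n, |Φ2 u u'| ≤ ‖u‖ * ‖u'‖ := by
    intro u u'
    have h1 : Φ2 u u' = iteratedFDeriv ℝ 2 φ x0 ![u, u'] := by
      rw [iteratedFDeriv_two_apply]
      simp only [Matrix.cons_val_zero, Matrix.cons_val_one, Matrix.head_cons]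
      rfl
    have h2 : ‖iteratedFDeriv ℝ 2 φ x0‖ ≤ 1 := by
      have h := hC11.2.2 x0 hx0
      rwa [iteratedFDerivWithin_of_isOpen 2 isOpen_ball hx0] at h
    rw [h1, ← Real.norm_eq_abs]
    calc ‖iteratedFDeriv ℝ 2 φ x0 ![u, u']‖
        ≤ ‖iteratedFDeriv ℝ 2 φ x0‖ * ∏ i, ‖![u, u'] i‖ :=
          (iteratedFDeriv ℝ 2 φ x0).le_opNorm _
      _ ≤ 1 * (‖u‖ * ‖u'‖) := by
          rw [Fin.prod_univ_two]
          simp only [Matrix.cons_val_zero, Matrix.cons_val_one, Matrix.head_cons]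
          exact mul_le_mul_of_nonneg_right h2 (by positivity)
      _ = ‖u‖ * ‖u'‖ := one_mul _
  have hvknorm : ∀ k, ‖vv k‖ ≤ 1 := by
    intro k
    have h1 : ‖e k‖ = 1 := heon.1 k
    have h2 := norm_sq_split (e k)
    rw [h1] at h2
    nlinarith [norm_nonneg (vv k), norm_nonneg (zPart n m (e k)), sq_nonneg (‖vv k‖ - 1)]
  have hconstr : ∀ k, ⟪w, a k⟫ = r * (ε * fderiv ℝ φ x0 (vv k)) := by
    intro k
    have h0 := hker (e k) (he k)
    rw [fderivWithin_of_isOpen hU hX, (hasFDerivAt_Hfun hφ hX).fderiv, D1_apply] at h0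
    have hrne : r ≠ 0 := ne_of_gt hr0
    have h1 : r⁻¹ * ⟪w, a k⟫ = ε * fderiv ℝ φ x0 (vv k) := by linarith
    calc ⟪w, a k⟫ = r * (r⁻¹ * ⟪w, a k⟫) := by field_simp
      _ = r * (ε * fderiv ℝ φ x0 (vv k)) := by rw [h1]
  have hCS : ∀ k, ⟪w, a k⟫ ^ 2 ≤ r ^ 2 * ‖a k‖ ^ 2 := by
    intro k
    calc ⟪w, a k⟫ ^ 2 = ⟪w, a k⟫ * ⟪w, a k⟫ := sq ⟪w, a k⟫
      _ ≤ ⟪w, w⟫ * ⟪a k, a k⟫ := real_inner_mul_inner_self_le _ _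
      _ = r ^ 2 * ‖a k‖ ^ 2 := by
          rw [real_inner_self_eq_norm_sq, real_inner_self_eq_norm_sq]
  set σ := ∑ k, ‖a k‖ ^ 2 with hσdef
  have hσ0 : 0 ≤ σ := Finset.sum_nonneg fun k _ => sq_nonneg _
  by_cases hcase : σ ≤ 1 / 4
  · -- CASE 1 : σ small, use Pucci
    haveI : Nonempty (Fin n) := ⟨⟨0, hn⟩⟩
    have heon' := heon.codRestrict L he
    have hspan : ⊤ ≤ Submodule.span ℝ (Set.range (Set.codRestrict e L he)) :=
      (heon'.linearIndependent.span_eq_top_of_card_eq_finrank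
        (by rw [Fintype.card_fin, hL])).ge
    set bL : OrthonormalBasis (Fin n) ℝ L := OrthonormalBasis.mk heon' hspan with hbL
    have hbLk : ∀ k, (bL k : Euc (n + m)) = e k := by
      intro k
      rw [hbL, OrthonormalBasis.coe_mk]
      rfl
    have hcoeff : ∀ (y : L) (k : Fin n), bL.repr y k = ⟪e k, (y : Euc (n + m))⟫ := by
      intro y k
      rw [bL.repr_apply_apply]
      rw [Submodule.coe_inner, hbLk]
    have hcoe : ∀ y : L, (y : Euc (n + m)) = ∑ k, ⟪e k, (y : Euc (n + m))⟫ • e k := by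
      intro y
      conv_lhs => rw [← bL.sum_repr y]
      rw [Submodule.coe_sum]
      refine Finset.sum_congr rfl fun k _ => ?_
      rw [Submodule.coe_smul, hbLk, hcoeff]
    have hnormsq : ∀ y : L, ∑ k, ⟪e k, (y : Euc (n + m))⟫ ^ 2 = ‖(y : Euc (n + m))‖ ^ 2 := by
      intro y
      have h2 : ‖bL.repr y‖ = ‖y‖ := bL.repr.norm_map y
      have h3 : ‖bL.repr y‖ ^ 2 = ∑ k, (bL.repr y k) ^ 2 := by
        rw [← real_inner_self_eq_norm_sq, PiLp.inner_apply]
        exact Finset.sum_congr rfl fun k _ => by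
          simp [RCLike.inner_apply, sq]
      calc ∑ k, ⟪e k, (y : Euc (n + m))⟫ ^ 2 = ∑ k, (bL.repr y k) ^ 2 :=
            Finset.sum_congr rfl fun k _ => by rw [hcoeff]
        _ = ‖bL.repr y‖ ^ 2 := h3.symm
        _ = ‖y‖ ^ 2 := by rw [h2]
        _ = ‖(y : Euc (n + m))‖ ^ 2 := rfl
    have hTy : ∀ y : L, ‖Tm n m A (y : Euc (n + m))‖ ^ 2 ≤ σ * ‖(y : Euc (n + m))‖ ^ 2 := by
      intro y
      have h1 : Tm n m A (y : Euc (n + m)) = ∑ k, ⟪e k, (y : Euc (n + m))⟫ • a k := by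
        conv_lhs => rw [hcoe y]
        rw [map_sum]
        exact Finset.sum_congr rfl fun k _ => by rw [_root_.map_smul]
      have h2 : ‖Tm n m A (y : Euc (n + m))‖ ≤ ∑ k, |⟪e k, (y : Euc (n + m))⟫| * ‖a k‖ := by
        rw [h1]
        refine (norm_sum_le _ _).trans (le_of_eq (Finset.sum_congr rfl fun k _ => ?_))
        rw [norm_smul, Real.norm_eq_abs]
      have h3 := Finset.sum_mul_sq_le_sq_mul_sq Finset.univ
        (fun k => |⟪e k, (y : Euc (n + m))⟫|) (fun k => ‖a k‖)
      have h4 : ∑ k, |⟪e k, (y : Euc (n + m))⟫| ^ 2 = ‖(y : Euc (n + m))‖ ^ 2 := by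
        rw [← hnormsq y]
        exact Finset.sum_congr rfl fun k _ => sq_abs _
      have h5 : ‖Tm n m A (y : Euc (n + m))‖ ^ 2
          ≤ (∑ k, |⟪e k, (y : Euc (n + m))⟫| * ‖a k‖) ^ 2 :=
        pow_le_pow_left₀ (norm_nonneg _) h2 2
      rw [h4] at h3
      calc ‖Tm n m A (y : Euc (n + m))‖ ^ 2
          ≤ (∑ k, |⟪e k, (y : Euc (n + m))⟫| * ‖a k‖) ^ 2 := h5
        _ ≤ ‖(y : Euc (n + m))‖ ^ 2 * σ := h3
        _ = σ * ‖(y : Euc (n + m))‖ ^ 2 := mul_comm _ _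
    set πL : L →ₗ[ℝ] Euc n := ((xC n m).toLinearMap).comp (L.subtype) with hπL
    have hinj : Function.Injective πL := by
      refine LinearMap.ker_eq_bot.mp (LinearMap.ker_eq_bot'.mpr fun y hy0 => ?_)
      have hy0' : xPart n m (y : Euc (n + m)) = 0 := hy0
      have hTz : Tm n m A (y : Euc (n + m)) = zPart n m (y : Euc (n + m)) := by
        rw [Tm_apply, hy0', map_zero, sub_zero]
      have hns := norm_sq_split (y : Euc (n + m))
      rw [hy0'] at hns
      simp only [norm_zero] at hns
      have h6 := hTy y
      rw [hTz] at h6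
      have h9 : ‖(y : Euc (n + m))‖ = 0 := by
        nlinarith [norm_nonneg (y : Euc (n + m)), sq_nonneg (‖(y : Euc (n + m))‖)]
      exact Submodule.coe_eq_zero.mp (norm_eq_zero.mp h9)
    have hfr : Module.finrank ℝ L = Module.finrank ℝ (Euc n) := by
      rw [hL, finrank_euclideanSpace_fin]
    have hsurj : Function.Surjective πL :=
      (LinearMap.injective_iff_surjective_of_finrank_eq_finrank hfr).mp hinj
    have hq : ∀ u : Euc n, ‖u‖ = 1 →
        ((4 * (1 + K ^ 2))⁻¹ ≤ ∑ k, ⟪u, vv k⟫ ^ 2 ∧ ∑ k, ⟪u, vv k⟫ ^ 2 ≤ 1) := by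
      intro u hu
      have hWin : ∀ Y : Euc (n + m), ⟪pairPt n m u 0, Y⟫ = ⟪u, xPart n m Y⟫ :=
        fun Y => inner_pairPt u Y
      constructor
      · obtain ⟨y, hy⟩ := hsurj u
        have hy' : xPart n m ((y : Euc (n + m))) = u := hy
        have hTyb := hTy y
        have hzy : zPart n m (y : Euc (n + m)) = Tm n m A (y : Euc (n + m)) + A u := by
          rw [Tm_apply, hy']
          abel
        have hnsy := norm_sq_split (y : Euc (n + m))
        rw [hy', hu] at hnsy
        have hAu : ‖A u‖ ≤ K := by
          calc ‖A u‖ ≤ ‖A‖ * ‖u‖ := A.le_opNorm u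
            _ ≤ K * 1 := by rw [hu]; exact mul_le_mul_of_nonneg_right hA zero_le_one
            _ = K := mul_one K
        have hz2 : ‖zPart n m (y : Euc (n + m))‖ ≤ ‖Tm n m A (y : Euc (n + m))‖ + K := by
          rw [hzy]
          exact (norm_add_le _ _).trans (by linarith)
        have ht2b : ‖(y : Euc (n + m))‖ ^ 2 ≤ 4 * (1 + K ^ 2) := by
          nlinarith [norm_nonneg (Tm n m A (y : Euc (n + m))),
            norm_nonneg (zPart n m (y : Euc (n + m))), hK, hcase, hσ0,
            sq_nonneg (‖Tm n m A (y : Euc (n + m))‖ - K), hTyb, hnsy, hz2,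
            sq_nonneg (‖(y : Euc (n + m))‖)]
        have hone : ⟪pairPt n m u 0, (y : Euc (n + m))⟫ = 1 := by
          rw [hWin, hy', real_inner_self_eq_norm_sq, hu]
          norm_num
        have hexp2 : ⟪pairPt n m u 0, (y : Euc (n + m))⟫
            = ∑ k, ⟪e k, (y : Euc (n + m))⟫ * ⟪u, vv k⟫ := by
          conv_lhs => rw [hcoe y]
          rw [inner_sum]
          refine Finset.sum_congr rfl fun k _ => ?_
          rw [real_inner_smul_right, hWin]
        have hCS3 : (∑ k, ⟪e k, (y : Euc (n + m))⟫ * ⟪u, vv k⟫) ^ 2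
            ≤ (∑ k, ⟪e k, (y : Euc (n + m))⟫ ^ 2) * ∑ k, ⟪u, vv k⟫ ^ 2 :=
          Finset.sum_mul_sq_le_sq_mul_sq Finset.univ
            (fun k => ⟪e k, (y : Euc (n + m))⟫) (fun k => ⟪u, vv k⟫)
        rw [← hexp2, hone, hnormsq y, one_pow] at hCS3
        have hq0 : 0 ≤ ∑ k, ⟪u, vv k⟫ ^ 2 := Finset.sum_nonneg fun k _ => sq_nonneg _
        have h45 : 1 ≤ (4 * (1 + K ^ 2)) * ∑ k, ⟪u, vv k⟫ ^ 2 := by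
          have h46 := mul_le_mul_of_nonneg_right ht2b hq0
          linarith
        calc (4 * (1 + K ^ 2))⁻¹ = (4 * (1 + K ^ 2))⁻¹ * 1 := (mul_one _).symm
          _ ≤ (4 * (1 + K ^ 2))⁻¹ * ((4 * (1 + K ^ 2)) * ∑ k, ⟪u, vv k⟫ ^ 2) :=
              mul_le_mul_of_nonneg_left h45 (by positivity)
          _ = ∑ k, ⟪u, vv k⟫ ^ 2 := by
              rw [← mul_assoc, inv_mul_cancel₀ (by positivity), one_mul]
      · have hWn : ‖pairPt n m u 0‖ ^ 2 = 1 := by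
          rw [norm_sq_split, xPart_pairPt, zPart_pairPt, hu]
          simp
        calc ∑ k, ⟪u, vv k⟫ ^ 2 = ∑ k, ‖⟪e k, pairPt n m u 0⟫‖ ^ 2 := by
              refine Finset.sum_congr rfl fun k _ => ?_
              have h7 : ⟪e k, pairPt n m u 0⟫ = ⟪u, vv k⟫ := by
                rw [real_inner_comm, hWin]
              rw [h7, Real.norm_eq_abs, sq_abs]
          _ ≤ ‖pairPt n m u 0‖ ^ 2 := heon.sum_inner_products_le _
          _ = 1 := hWn
    have htr : ∑ k, Φ2 (vv k) (vv k)
        ≤ pucciPlus ((4 * (1 + K ^ 2))⁻¹) 1 (hessWithin n (ball 0 1) φ x0) := by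
      rw [hΦ2def]
      exact sum_quadform_le_pucci φ hφ hx0 vv (fun u hu => (hq u hu).1) (fun u hu => (hq u hu).2)
    have hp : pucciPlus ((4 * (1 + K ^ 2))⁻¹) 1 (hessWithin n (ball 0 1) φ x0) < 0 :=
      hpucci x0 hx0
    have h1 : ∀ k, 0 ≤ r⁻¹ * ‖a k‖ ^ 2 - r⁻¹ ^ 3 * ⟪w, a k⟫ ^ 2 := by
      intro k
      have h2 := hCS k
      have key : r⁻¹ ^ 3 * ⟪w, a k⟫ ^ 2 ≤ r⁻¹ * ‖a k‖ ^ 2 := by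
        have e1 : r⁻¹ ^ 3 * (r ^ 2 * ‖a k‖ ^ 2) = r⁻¹ * ‖a k‖ ^ 2 := by
          field_simp
        calc r⁻¹ ^ 3 * ⟪w, a k⟫ ^ 2 ≤ r⁻¹ ^ 3 * (r ^ 2 * ‖a k‖ ^ 2) :=
            mul_le_mul_of_nonneg_left h2 (by positivity)
          _ = r⁻¹ * ‖a k‖ ^ 2 := e1
      linarith
    have hsplit : ∑ k, (r⁻¹ * ‖a k‖ ^ 2 - r⁻¹ ^ 3 * ⟪w, a k⟫ ^ 2 - ε * Φ2 (vv k) (vv k))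
        = (∑ k, (r⁻¹ * ‖a k‖ ^ 2 - r⁻¹ ^ 3 * ⟪w, a k⟫ ^ 2)) - ε * ∑ k, Φ2 (vv k) (vv k) := by
      rw [Finset.sum_sub_distrib, Finset.mul_sum]
    rw [hsplit]
    have hS1 : 0 ≤ ∑ k, (r⁻¹ * ‖a k‖ ^ 2 - r⁻¹ ^ 3 * ⟪w, a k⟫ ^ 2) :=
      Finset.sum_nonneg fun k _ => h1 k
    have h10 : ε * ∑ k, Φ2 (vv k) (vv k)
        ≤ ε * pucciPlus ((4 * (1 + K ^ 2))⁻¹) 1 (hessWithin n (ball 0 1) φ x0) :=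
      mul_le_mul_of_nonneg_left htr hε.le
    have h11 : ε * pucciPlus ((4 * (1 + K ^ 2))⁻¹) 1 (hessWithin n (ball 0 1) φ x0) < 0 :=
      mul_neg_of_pos_of_neg hε hp
    linarith
  · -- CASE 2 : σ large
    push_neg at hcase
    clear_value x0 w r a vv Φ2 σ
    have hDφk : ∀ k, |fderiv ℝ φ x0 (vv k)| ≤ 1 := by
      intro k
      calc |fderiv ℝ φ x0 (vv k)| = ‖fderiv ℝ φ x0 (vv k)‖ := (Real.norm_eq_abs _).symm
        _ ≤ ‖fderiv ℝ φ x0‖ * ‖vv k‖ := (fderiv ℝ φ x0).le_opNorm _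
        _ ≤ 1 * 1 := mul_le_mul hfdφ (hvknorm k) (norm_nonneg _) zero_le_one
        _ = 1 := mul_one 1
    have hper : ∀ k, r⁻¹ * ‖a k‖ ^ 2 - r⁻¹ ^ 3 * ⟪w, a k⟫ ^ 2 - ε * Φ2 (vv k) (vv k)
        ≥ r⁻¹ * ‖a k‖ ^ 2 - r⁻¹ * ε ^ 2 - ε := by
      intro k
      have hd2 : (fderiv ℝ φ x0 (vv k)) ^ 2 ≤ 1 := by
        rw [← sq_abs]
        exact pow_le_one₀ (abs_nonneg _) (hDφk k)
      have h2 : r⁻¹ ^ 3 * ⟪w, a k⟫ ^ 2 ≤ r⁻¹ * ε ^ 2 := by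
        rw [hconstr k]
        have h3 : (r * (ε * fderiv ℝ φ x0 (vv k))) ^ 2
            = r ^ 2 * ε ^ 2 * (fderiv ℝ φ x0 (vv k)) ^ 2 := by ring
        rw [h3]
        have h4 : (0 : ℝ) ≤ r⁻¹ ^ 3 * (r ^ 2 * ε ^ 2) := by positivity
        calc r⁻¹ ^ 3 * (r ^ 2 * ε ^ 2 * (fderiv ℝ φ x0 (vv k)) ^ 2)
            = (r⁻¹ ^ 3 * (r ^ 2 * ε ^ 2)) * (fderiv ℝ φ x0 (vv k)) ^ 2 := by ring
          _ ≤ (r⁻¹ ^ 3 * (r ^ 2 * ε ^ 2)) * 1 := mul_le_mul_of_nonneg_left hd2 h4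
          _ = r⁻¹ * ε ^ 2 := by
              field_simp
      have h5 : Φ2 (vv k) (vv k) ≤ 1 := by
        have h6 := hΦnorm (vv k) (vv k)
        have h7 := hvknorm k
        have h8 := norm_nonneg (vv k)
        have h9 := le_abs_self (Φ2 (vv k) (vv k))
        have hmm : ‖vv k‖ * ‖vv k‖ ≤ 1 := mul_le_one₀ h7 h8 h7
        linarith
      have h10 : ε * Φ2 (vv k) (vv k) ≤ ε :=
        (mul_le_mul_of_nonneg_left h5 hε.le).trans_eq (mul_one ε)
      linarith
    have hsum2 : ∑ k, (r⁻¹ * ‖a k‖ ^ 2 - r⁻¹ ^ 3 * ⟪w, a k⟫ ^ 2 - ε * Φ2 (vv k) (vv k))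
        ≥ ∑ k, (r⁻¹ * ‖a k‖ ^ 2 - r⁻¹ * ε ^ 2 - ε) :=
      Finset.sum_le_sum fun k _ => hper k
    have hrhs : ∑ k, (r⁻¹ * ‖a k‖ ^ 2 - r⁻¹ * ε ^ 2 - ε)
        = r⁻¹ * σ - (n : ℝ) * (r⁻¹ * ε ^ 2) - (n : ℝ) * ε := by
      rw [Finset.sum_sub_distrib, Finset.sum_sub_distrib, ← Finset.mul_sum]
      simp only [Finset.sum_const, Finset.card_univ, Fintype.card_fin, nsmul_eq_mul]
      rw [← hσdef]
    calc (0:ℝ) < r⁻¹ * σ - (n : ℝ) * (r⁻¹ * ε ^ 2) - (n : ℝ) * ε :=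
          final_numeric n r ε σ hr0 hrε hε hεle hcase
      _ = ∑ k, (r⁻¹ * ‖a k‖ ^ 2 - r⁻¹ * ε ^ 2 - ε) := hrhs.symm
      _ ≤ ∑ k, (r⁻¹ * ‖a k‖ ^ 2 - r⁻¹ ^ 3 * ⟪w, a k⟫ ^ 2 - ε * Φ2 (vv k) (vv k)) := hsum2
end
end
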